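/- Fix n ≥ 1 and a finite set F of ordered pairs (i,j) with i ≠ j that is symmetric, i.e., (i,j) ∈ F if and only if (j,i) ∈ F. Under the hypotheses of the first-order perturbation formula — namely, A(ε) = A₀ + ε·Σ_{(i,j)∈F} E_ij with A₀ a real n×n matrix with zero diagonal, L(ε) = D(ε) − A(ε) the Laplacian, and differentiable branches ξ(ε), y(ε), κ(ε) with ξ(ε)ᵀL(ε) = 0, 𝟏ᵀξ(ε) = 1, ((Ξ(ε)L(ε) + L(ε)ᵀΞ(ε))/2)·y(ε) = κ(ε)·Ξ(ε)·y(ε), y(ε)ᵀΞ(ε)y(ε) = 1 — suppose additionally that ξ(ε) = (1/n)·𝟏 for all ε in a neighborhood of 0. Then the derivative of κ at 0 satisfies κ′(0) = Σ_{{i,j} : (i,j)∈F} (1/n)·(y_i(0) − y_j(0))², where the sum ranges over unordered pairs {i,j} with (i,j) ∈ F, and in particular κ′(0) ≥ 0. -/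

import Mathlib

open Matrix Filter

/-- Recovering the classical undirected monotonicity law: under a symmetric
edge-weight perturbation with uniform stationary distribution ξ(ε) = (1/n)·𝟏,
κ′(0) = Σ_{unordered pairs {i,j} with (i,j)∈F} (1/n)·(y_i − y_j)² ≥ 0. -/
theorem stmt12 (n : ℕ) (hn : 1 ≤ n)
    (A₀ : Matrix (Fin n) (Fin n) ℝ) (hA₀ : ∀ i, A₀ i i = 0)
    (F : Finset (Fin n × Fin n)) (hF : ∀ p ∈ F, p.1 ≠ p.2)
    (hFsymm : ∀ p : Fin n × Fin n, p ∈ F ↔ (p.2, p.1) ∈ F)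
    (A : ℝ → Matrix (Fin n) (Fin n) ℝ)
    (hA : ∀ ε, A ε = A₀ + ε • ∑ p ∈ F, Matrix.single p.1 p.2 (1 : ℝ))
    (L : ℝ → Matrix (Fin n) (Fin n) ℝ)
    (hL : ∀ ε, L ε = Matrix.diagonal (fun i => ∑ j, A ε i j) - A ε)
    (ξ y : ℝ → Fin n → ℝ) (ξ' y' : Fin n → ℝ) (κ : ℝ → ℝ) (κ' : ℝ)
    (hξd : ∀ i, HasDerivAt (fun ε => ξ ε i) (ξ' i) 0)
    (hyd : ∀ i, HasDerivAt (fun ε => y ε i) (y' i) 0)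
    (hκd : HasDerivAt κ κ' 0)
    (hstat : ∀ᶠ ε in nhds (0 : ℝ), (L ε)ᵀ *ᵥ ξ ε = 0)
    (hnorm1 : ∀ᶠ ε in nhds (0 : ℝ), ∑ i, ξ ε i = 1)
    (heig : ∀ᶠ ε in nhds (0 : ℝ),
      (((1 : ℝ)/2) • (Matrix.diagonal (ξ ε) * L ε + (L ε)ᵀ * Matrix.diagonal (ξ ε))) *ᵥ y ε
        = κ ε • (Matrix.diagonal (ξ ε) *ᵥ y ε))
    (hnorm2 : ∀ᶠ ε in nhds (0 : ℝ), y ε ⬝ᵥ (Matrix.diagonal (ξ ε) *ᵥ y ε) = 1)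
    (hξuniform : ∀ᶠ ε in nhds (0 : ℝ), ξ ε = fun _ => 1 / (n : ℝ)) :
    κ' = (∑ e ∈ F.image (fun p => Sym2.mk p.1 p.2),
            Sym2.lift ⟨fun i j => (1 / (n : ℝ)) * (y 0 i - y 0 j) ^ 2,
              fun a b => by ring⟩ e)
      ∧ 0 ≤ κ' := by
  classical
  have hnpos : (0:ℝ) < (n:ℝ) := by exact_mod_cast hn
  have hn0 : (n:ℝ) ≠ 0 := ne_of_gt hnpos
  set P : Matrix (Fin n) (Fin n) ℝ := ∑ p ∈ F, Matrix.single p.1 p.2 (1:ℝ) with hP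
  set L₁ : Matrix (Fin n) (Fin n) ℝ :=
    Matrix.diagonal (fun i => ∑ j, P i j) - P with hL₁def
  set L₀ : Matrix (Fin n) (Fin n) ℝ :=
    Matrix.diagonal (fun i => ∑ j, A₀ i j) - A₀ with hL₀def
  have hLaff : ∀ ε, L ε = L₀ + ε • L₁ := by
    intro ε
    rw [hL, hA]
    ext i j
    by_cases hij : i = j
    · subst hij
      simp only [hL₀def, hL₁def, Matrix.add_apply, Matrix.sub_apply, Matrix.smul_apply,
        smul_eq_mul, Matrix.diagonal_apply_eq]
      rw [Finset.sum_add_distrib, ← Finset.mul_sum]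
      ring
    · simp only [hL₀def, hL₁def, Matrix.add_apply, Matrix.sub_apply, Matrix.smul_apply,
        smul_eq_mul, Matrix.diagonal_apply_ne _ hij]
      ring
  set S₀ : Matrix (Fin n) (Fin n) ℝ := L₀ + L₀ᵀ with hS₀def
  set S₁ : Matrix (Fin n) (Fin n) ℝ := L₁ + L₁ᵀ with hS₁def
  -- the eigen equation and normalization in simplified form
  have key : ∀ᶠ ε in nhds (0:ℝ),
      (((1:ℝ)/(2*n)) • (S₀ + ε • S₁)) *ᵥ y ε = (κ ε / n) • y ε ∧
      ((1:ℝ)/n) * (y ε ⬝ᵥ y ε) = 1 := by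
    filter_upwards [heig, hnorm2, hξuniform] with ε he hn2 hu
    have hdiag : Matrix.diagonal (ξ ε) = ((1:ℝ)/n) • (1 : Matrix (Fin n) (Fin n) ℝ) := by
      rw [hu]; ext i j
      by_cases hij : i = j <;> simp [Matrix.diagonal_apply, Matrix.one_apply, hij]
    rw [hdiag] at he hn2
    have hLsum : L ε + (L ε)ᵀ = S₀ + ε • S₁ := by
      rw [hLaff, hS₀def, hS₁def]
      simp only [Matrix.transpose_add, Matrix.transpose_smul, smul_add]
      abel
    constructor
    · have h1 : ((1:ℝ)/2) • (((1:ℝ)/n) • (1 : Matrix (Fin n) (Fin n) ℝ) * L ε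
          + (L ε)ᵀ * (((1:ℝ)/n) • (1 : Matrix (Fin n) (Fin n) ℝ)))
          = ((1:ℝ)/(2*n)) • (S₀ + ε • S₁) := by
        rw [smul_mul_assoc, one_mul, mul_smul_comm, mul_one, ← smul_add, hLsum, smul_smul]
        congr 1
        field_simp
      have h2 : κ ε • ((((1:ℝ)/n) • (1 : Matrix (Fin n) (Fin n) ℝ)) *ᵥ y ε)
          = (κ ε / n) • y ε := by
        rw [Matrix.smul_mulVec, Matrix.one_mulVec, smul_smul]
        congr 1
        field_simp
      rw [h1, h2] at he
      exact he
    · rw [Matrix.smul_mulVec, Matrix.one_mulVec, dotProduct_smul,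
        smul_eq_mul] at hn2
      exact hn2
  -- the scalar function h(ε) = (1/(2n)) yᵀ(S₀+εS₁)y equals κ near 0
  set h : ℝ → ℝ :=
    fun ε => ((1:ℝ)/(2*n)) * ∑ i, ∑ j, y ε i * (S₀ i j + ε * S₁ i j) * y ε j with hhdef
  have hhk : h =ᶠ[nhds (0:ℝ)] κ := by
    filter_upwards [key] with ε hkey
    obtain ⟨he, hn2⟩ := hkey
    have hyy : y ε ⬝ᵥ y ε = (n:ℝ) := by
      field_simp at hn2; linarith
    have hexp : h ε = y ε ⬝ᵥ ((((1:ℝ)/(2*n)) • (S₀ + ε • S₁)) *ᵥ y ε) := by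
      rw [Matrix.smul_mulVec, dotProduct_smul, smul_eq_mul, hhdef]
      congr 1
      simp only [dotProduct, Matrix.mulVec, Finset.mul_sum,
        Matrix.add_apply, Matrix.smul_apply, smul_eq_mul]
      exact Finset.sum_congr rfl fun i _ => Finset.sum_congr rfl fun j _ => by ring
    rw [hexp, he, dotProduct_smul, smul_eq_mul, hyy]
    field_simp
  -- derivative of h at 0
  have hterm : ∀ i j, HasDerivAt (fun ε => y ε i * (S₀ i j + ε * S₁ i j) * y ε j)
      (y' i * S₀ i j * y 0 j + y 0 i * S₁ i j * y 0 j + y 0 i * S₀ i j * y' j) 0 := by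
    intro i j
    have h1 : HasDerivAt (fun ε : ℝ => S₀ i j + ε * S₁ i j) (S₁ i j) 0 := by
      simpa using ((hasDerivAt_id (0:ℝ)).mul_const (S₁ i j)).const_add (S₀ i j)
    have h2 := ((hyd i).fun_mul h1).fun_mul (hyd j)
    exact h2.congr_deriv (by ring)
  have hhd : HasDerivAt h (((1:ℝ)/(2*n)) * ∑ i, ∑ j,
      (y' i * S₀ i j * y 0 j + y 0 i * S₁ i j * y 0 j + y 0 i * S₀ i j * y' j)) 0 := by
    apply HasDerivAt.const_mul
    exact HasDerivAt.fun_sum fun i _ => HasDerivAt.fun_sum fun j _ => hterm i j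
  have hκh : HasDerivAt h κ' 0 := hκd.congr_of_eventuallyEq hhk
  have hD : κ' = ((1:ℝ)/(2*n)) * ∑ i, ∑ j,
      (y' i * S₀ i j * y 0 j + y 0 i * S₁ i j * y 0 j + y 0 i * S₀ i j * y' j) :=
    hκh.unique hhd
  -- orthogonality y' ⬝ y 0 = 0
  have horth : ∑ i, y' i * y 0 i = 0 := by
    have hyy : HasDerivAt (fun ε => ∑ i, y ε i * y ε i)
        (∑ i, (y' i * y 0 i + y 0 i * y' i)) 0 :=
      HasDerivAt.fun_sum fun i _ => (hyd i).fun_mul (hyd i)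
    have hconstEq : (fun ε => ∑ i, y ε i * y ε i) =ᶠ[nhds (0:ℝ)] fun _ => (n:ℝ) := by
      filter_upwards [key] with ε hkey
      have hn2 := hkey.2
      have : y ε ⬝ᵥ y ε = (n:ℝ) := by field_simp at hn2; linarith
      simpa [dotProduct] using this
    have hconst : HasDerivAt (fun ε => ∑ i, y ε i * y ε i) 0 0 :=
      (hasDerivAt_const (0:ℝ) ((n:ℝ))).congr_of_eventuallyEq hconstEq
    have h0 : ∑ i, (y' i * y 0 i + y 0 i * y' i) = 0 := hyy.unique hconst
    have h2 : ∑ i, (y' i * y 0 i + y 0 i * y' i) = 2 * ∑ i, y' i * y 0 i := by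
      rw [Finset.mul_sum]
      exact Finset.sum_congr rfl fun i _ => by ring
    linarith [h0, h2]
  -- eigen equation at ε = 0, entrywise
  obtain ⟨he0, hn20⟩ := key.self_of_nhds
  rw [zero_smul, add_zero, Matrix.smul_mulVec] at he0
  have he0' : ∀ i, ((1:ℝ)/(2*n)) * ∑ j, S₀ i j * y 0 j = (κ 0 / n) * y 0 i := by
    intro i
    have h1 := congrFun he0 i
    simp only [Pi.smul_apply, smul_eq_mul, Matrix.mulVec, dotProduct] at h1
    exact h1
  have hS₀symm : ∀ i j, S₀ i j = S₀ j i := by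
    intro i j
    simp [hS₀def, Matrix.add_apply, Matrix.transpose_apply, add_comm]
  -- the two cross terms vanish
  have hT1 : ((1:ℝ)/(2*n)) * ∑ i, ∑ j, y' i * S₀ i j * y 0 j = 0 := by
    calc ((1:ℝ)/(2*n)) * ∑ i, ∑ j, y' i * S₀ i j * y 0 j
        = ∑ i, y' i * (((1:ℝ)/(2*n)) * ∑ j, S₀ i j * y 0 j) := by
          simp only [Finset.mul_sum]
          exact Finset.sum_congr rfl fun i _ => Finset.sum_congr rfl fun j _ => by ring
      _ = ∑ i, y' i * ((κ 0 / n) * y 0 i) :=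
          Finset.sum_congr rfl fun i _ => by rw [he0' i]
      _ = (κ 0 / n) * ∑ i, y' i * y 0 i := by
          simp only [Finset.mul_sum]
          exact Finset.sum_congr rfl fun i _ => by ring
      _ = 0 := by rw [horth, mul_zero]
  have hT3 : ((1:ℝ)/(2*n)) * ∑ i, ∑ j, y 0 i * S₀ i j * y' j = 0 := by
    have hswap : ∑ i, ∑ j, y 0 i * S₀ i j * y' j = ∑ i, ∑ j, y' i * S₀ i j * y 0 j := by
      rw [Finset.sum_comm]
      exact Finset.sum_congr rfl fun j _ => Finset.sum_congr rfl fun i _ => by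
        rw [hS₀symm i j]; ring
    rw [hswap]; exact hT1
  have hDmain : κ' = ((1:ℝ)/(2*n)) * ∑ i, ∑ j, y 0 i * S₁ i j * y 0 j := by
    have hsplit : ∑ i, ∑ j,
        (y' i * S₀ i j * y 0 j + y 0 i * S₁ i j * y 0 j + y 0 i * S₀ i j * y' j)
        = (∑ i, ∑ j, y' i * S₀ i j * y 0 j) + (∑ i, ∑ j, y 0 i * S₁ i j * y 0 j)
          + (∑ i, ∑ j, y 0 i * S₀ i j * y' j) := by
      simp [Finset.sum_add_distrib]
    rw [hD, hsplit, mul_add, mul_add, hT1, hT3]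
    ring
  -- reduce S₁ to L₁
  have hS₁sum : ∑ i, ∑ j, y 0 i * S₁ i j * y 0 j
      = 2 * ∑ i, ∑ j, y 0 i * L₁ i j * y 0 j := by
    have hterm2 : ∀ i j, y 0 i * S₁ i j * y 0 j
        = y 0 i * L₁ i j * y 0 j + y 0 i * L₁ j i * y 0 j := by
      intro i j
      simp only [hS₁def, Matrix.add_apply, Matrix.transpose_apply]
      ring
    have hswap2 : ∑ i, ∑ j, y 0 i * L₁ j i * y 0 j
        = ∑ i, ∑ j, y 0 i * L₁ i j * y 0 j := by
      rw [Finset.sum_comm]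
      exact Finset.sum_congr rfl fun i _ => Finset.sum_congr rfl fun j _ => by ring
    calc ∑ i, ∑ j, y 0 i * S₁ i j * y 0 j
        = ∑ i, ∑ j, (y 0 i * L₁ i j * y 0 j + y 0 i * L₁ j i * y 0 j) := by
          exact Finset.sum_congr rfl fun i _ => Finset.sum_congr rfl fun j _ => hterm2 i j
      _ = (∑ i, ∑ j, y 0 i * L₁ i j * y 0 j) + ∑ i, ∑ j, y 0 i * L₁ j i * y 0 j := by
          simp [Finset.sum_add_distrib]
      _ = 2 * ∑ i, ∑ j, y 0 i * L₁ i j * y 0 j := by rw [hswap2]; ring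
  -- P-weighted sums reduce to sums over F
  have hPsum : ∀ f : Fin n → Fin n → ℝ,
      (∑ i, ∑ j, P i j * f i j) = ∑ p ∈ F, f p.1 p.2 := by
    intro f
    have hPij : ∀ i j, P i j * f i j
        = ∑ p ∈ F, (if p.1 = i ∧ p.2 = j then f i j else 0) := by
      intro i j
      rw [hP]
      simp [Matrix.sum_apply, Matrix.single, Finset.sum_mul, ite_mul,
        one_mul, zero_mul]
      rw [Finset.sum_ite, Finset.sum_const, Finset.sum_const_zero, add_zero, nsmul_eq_mul]
    simp_rw [hPij]
    rw [show (∑ i, ∑ j, ∑ p ∈ F, (if p.1 = i ∧ p.2 = j then f i j else 0))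
        = ∑ i, ∑ p ∈ F, ∑ j, (if p.1 = i ∧ p.2 = j then f i j else 0) from
      Finset.sum_congr rfl fun i _ => Finset.sum_comm, Finset.sum_comm]
    refine Finset.sum_congr rfl fun p _ => ?_
    simp [ite_and, Finset.sum_ite_eq]
  -- quadratic form of L₁
  have hquad : ∑ i, ∑ j, y 0 i * L₁ i j * y 0 j
      = ∑ p ∈ F, (y 0 p.1 * y 0 p.1 - y 0 p.1 * y 0 p.2) := by
    have hrow : ∀ i, ∑ j, y 0 i * L₁ i j * y 0 j
        = ∑ j, P i j * (y 0 i * y 0 i) - ∑ j, P i j * (y 0 i * y 0 j) := by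
      intro i
      have : ∀ j, y 0 i * L₁ i j * y 0 j
          = (if i = j then (∑ k, P i k) * (y 0 i * y 0 j) else 0) - y 0 i * P i j * y 0 j := by
        intro j
        simp only [hL₁def, Matrix.sub_apply, Matrix.diagonal_apply]
        by_cases hij : i = j <;> simp [hij] <;> ring
      rw [Finset.sum_congr rfl fun j _ => this j, Finset.sum_sub_distrib]
      congr 1
      · rw [Finset.sum_ite_eq Finset.univ i fun j => (∑ k, P i k) * (y 0 i * y 0 j)]
        simp [Finset.sum_mul]
      · exact Finset.sum_congr rfl fun j _ => by ring
    calc ∑ i, ∑ j, y 0 i * L₁ i j * y 0 j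
        = ∑ i, ∑ j, P i j * (y 0 i * y 0 i - y 0 i * y 0 j) := by
          refine Finset.sum_congr rfl fun i _ => ?_
          rw [hrow i, ← Finset.sum_sub_distrib]
          exact Finset.sum_congr rfl fun j _ => by ring
      _ = ∑ p ∈ F, (y 0 p.1 * y 0 p.1 - y 0 p.1 * y 0 p.2) :=
          hPsum fun i j => y 0 i * y 0 i - y 0 i * y 0 j
  -- symmetrize over F
  have hFswap : ∀ g : Fin n × Fin n → ℝ, ∑ p ∈ F, g p = ∑ p ∈ F, g (p.2, p.1) := by
    intro g
    refine Finset.sum_nbij' (fun p => (p.2, p.1)) (fun p => (p.2, p.1))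
      (fun p hp => (hFsymm p).mp hp) (fun p hp => (hFsymm p).mp hp)
      (fun p _ => rfl) (fun p _ => rfl) (fun p _ => rfl)
  have hsym2 : 2 * ∑ p ∈ F, (y 0 p.1 * y 0 p.1 - y 0 p.1 * y 0 p.2)
      = ∑ p ∈ F, (y 0 p.1 - y 0 p.2)^2 := by
    have hsw := hFswap (fun p => y 0 p.1 * y 0 p.1 - y 0 p.1 * y 0 p.2)
    rw [two_mul]
    nth_rewrite 2 [hsw]
    rw [← Finset.sum_add_distrib]
    exact Finset.sum_congr rfl fun p _ => by ring
  -- fiber count for Sym2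
  have hfiber : ∑ p ∈ F, (y 0 p.1 - y 0 p.2)^2
      = ∑ e ∈ F.image (fun p => Sym2.mk p.1 p.2),
          2 * Sym2.lift ⟨fun i j => (y 0 i - y 0 j)^2, fun a b => by ring⟩ e := by
    have hcomp : ∑ p ∈ F, (y 0 p.1 - y 0 p.2)^2
        = ∑ p ∈ F, Sym2.lift ⟨fun i j => (y 0 i - y 0 j)^2, fun a b => by ring⟩ (Sym2.mk p.1 p.2) := by
      refine Finset.sum_congr rfl fun p _ => ?_
      obtain ⟨a, b⟩ := p
      simp [Sym2.lift_mk]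
    rw [hcomp, Finset.sum_comp]
    refine Finset.sum_congr rfl fun e he => ?_
    obtain ⟨p, hpF, hpe⟩ := Finset.mem_image.mp he
    have hpne : p ≠ p.swap := by
      intro hc
      exact hF p hpF (by simpa using congrArg Prod.fst hc)
    have hset : F.filter (fun q => Sym2.mk q.1 q.2 = e) = {p, p.swap} := by
      ext q
      simp only [Finset.mem_filter, Finset.mem_insert, Finset.mem_singleton]
      constructor
      · rintro ⟨hq, hqe⟩
        rw [← hpe] at hqe
        exact Sym2.mk_eq_mk_iff.mp hqe
      · rintro (rfl | rfl)
        · exact ⟨hpF, hpe⟩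
        · refine ⟨(hFsymm p).mp hpF, ?_⟩
          rw [← hpe]
          exact Sym2.mk_eq_mk_iff.mpr (Or.inr rfl)
    rw [hset, Finset.card_pair hpne]
    simp
  -- nonnegativity of the final sum
  have hnn : (0:ℝ) ≤ ∑ e ∈ F.image (fun p => Sym2.mk p.1 p.2),
      Sym2.lift ⟨fun i j => (1 / (n : ℝ)) * (y 0 i - y 0 j) ^ 2, fun a b => by ring⟩ e := by
    refine Finset.sum_nonneg fun e _ => ?_
    induction e using Sym2.ind with
    | _ a b =>
      rw [Sym2.lift_mk]
      positivity
  -- assemble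
  have hfinal : κ' = ∑ e ∈ F.image (fun p => Sym2.mk p.1 p.2),
      Sym2.lift ⟨fun i j => (1 / (n : ℝ)) * (y 0 i - y 0 j) ^ 2, fun a b => by ring⟩ e := by
    rw [hDmain, hS₁sum, hquad]
    have h2S : ∑ p ∈ F, (y 0 p.1 * y 0 p.1 - y 0 p.1 * y 0 p.2)
        = (1/2) * ∑ p ∈ F, (y 0 p.1 - y 0 p.2)^2 := by
      rw [← hsym2]; ring
    rw [h2S, hfiber]
    simp only [Finset.mul_sum]
    refine Finset.sum_congr rfl fun e _ => ?_
    induction e using Sym2.ind with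
    | _ a b =>
      rw [Sym2.lift_mk, Sym2.lift_mk]
      field_simp
  exact ⟨hfinal, hfinal ▸ hnn⟩
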